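/- Let q be a prime power, let F ∈ 𝔽_q[x] be a polynomial of degree k ≥ 1, and let m, n be positive integers with k(m−1) ≤ n−1. Then there exist multivariate polynomials φ₀, φ₁, ..., φ_{n−1} ∈ 𝔽_q[y₀, ..., y_{m−1}], each of total degree at most min{k, (q−1)(1 + log_q k)}, such that for every (c₀, ..., c_{m−1}) ∈ 𝔽_q^m the identity F(c₀ + c₁x + ⋯ + c_{m−1}x^{m−1}) = φ₀(c₀, ..., c_{m−1}) + φ₁(c₀, ..., c_{m−1})x + ⋯ + φ_{n−1}(c₀, ..., c_{m−1})x^{n−1} holds in 𝔽_q[x]; that is, for each 0 ≤ i ≤ n−1, the coefficient of x^i in F(c₀ + c₁x + ⋯ + c_{m−1}x^{m−1}) equals φ_i(c₀, ..., c_{m−1}). -/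

import Mathlib

open Polynomial in
noncomputable def auxL (K : Type) [CommSemiring K] (m q j : ℕ) :
    Polynomial (MvPolynomial (Fin m) K) :=
  ∑ i : Fin m, Polynomial.C (MvPolynomial.X i) * Polynomial.X ^ ((i : ℕ) * q ^ j)

noncomputable def auxQ (K : Type) [CommSemiring K] (m q d : ℕ) :
    Polynomial (MvPolynomial (Fin m) K) :=
  ∏ j ∈ Finset.range (Nat.digits q d).length, (auxL K m q j) ^ ((Nat.digits q d).getD j 0)

lemma auxL_coeff_totalDegree (K : Type) [CommSemiring K] [Nontrivial K] (m q j t : ℕ) :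
    ((auxL K m q j).coeff t).totalDegree ≤ 1 := by
  unfold auxL
  rw [Polynomial.finset_sum_coeff]
  apply MvPolynomial.totalDegree_finsetSum_le
  intro i _
  rw [Polynomial.coeff_C_mul, Polynomial.coeff_X_pow]
  split_ifs
  · simpa using (MvPolynomial.totalDegree_X (R := K) i).le
  · simp

lemma coeff_mul_totalDegree {K : Type} [CommSemiring K] {m : ℕ}
    {P R : Polynomial (MvPolynomial (Fin m) K)} {a b : ℕ}
    (hP : ∀ t, (P.coeff t).totalDegree ≤ a) (hR : ∀ t, (R.coeff t).totalDegree ≤ b)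
    (t : ℕ) : (((P * R).coeff t)).totalDegree ≤ a + b := by
  rw [Polynomial.coeff_mul]
  apply MvPolynomial.totalDegree_finsetSum_le
  intro x _
  exact (MvPolynomial.totalDegree_mul _ _).trans (add_le_add (hP _) (hR _))

lemma coeff_pow_totalDegree {K : Type} [CommSemiring K] {m : ℕ}
    {P : Polynomial (MvPolynomial (Fin m) K)} {a : ℕ}
    (hP : ∀ t, (P.coeff t).totalDegree ≤ a) (e : ℕ) (t : ℕ) :
    ((P ^ e).coeff t).totalDegree ≤ e * a := by
  induction e generalizing t with
  | zero =>
    simp only [pow_zero, Polynomial.coeff_one]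
    split_ifs <;> simp
  | succ e ih =>
    rw [pow_succ]
    exact (coeff_mul_totalDegree ih hP t).trans (by ring_nf; rfl)

lemma sum_range_getD (L : List ℕ) : ∑ j ∈ Finset.range L.length, L.getD j 0 = L.sum := by
  induction L with
  | nil => simp
  | cons a L ih =>
    rw [List.length_cons, Finset.sum_range_succ', List.sum_cons]
    simp only [List.getD_cons_succ, List.getD_cons_zero, ih]
    ring

lemma auxQ_coeff_totalDegree (K : Type) [CommSemiring K] [Nontrivial K] (m q d t : ℕ) :
    ((auxQ K m q d).coeff t).totalDegree ≤ (Nat.digits q d).sum := by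
  unfold auxQ
  have key : ∀ N : ℕ, ∀ t, (((∏ j ∈ Finset.range N,
      (auxL K m q j) ^ ((Nat.digits q d).getD j 0)).coeff t)).totalDegree ≤
      ∑ j ∈ Finset.range N, (Nat.digits q d).getD j 0 := by
    intro N
    induction N with
    | zero => intro t; simp only [Finset.range_zero, Finset.prod_empty, Finset.sum_empty,
        Polynomial.coeff_one]; split_ifs <;> simp
    | succ N ih =>
      intro t
      rw [Finset.prod_range_succ, Finset.sum_range_succ]
      refine coeff_mul_totalDegree ih (fun t => ?_) t
      simpa [mul_one] using coeff_pow_totalDegree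
        (fun t => auxL_coeff_totalDegree K m q N t) ((Nat.digits q d).getD N 0) t
  refine (key _ t).trans (le_of_eq (sum_range_getD _))


lemma ofDigits_eq_sum (b : ℕ) (L : List ℕ) :
    Nat.ofDigits b L = ∑ j ∈ Finset.range L.length, L.getD j 0 * b ^ j := by
  induction L with
  | nil => simp [Nat.ofDigits]
  | cons a L ih =>
    rw [List.length_cons, Finset.sum_range_succ', Nat.ofDigits_cons, ih, Finset.mul_sum]
    simp only [List.getD_cons_succ, List.getD_cons_zero, pow_zero, mul_one, pow_succ]
    rw [Nat.add_comm]
    congr 1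
    apply Finset.sum_congr rfl
    intro j _
    ring

lemma sum_le_ofDigits (b : ℕ) (hb : 1 ≤ b) (L : List ℕ) : L.sum ≤ Nat.ofDigits b L := by
  induction L with
  | nil => simp
  | cons a L ih =>
    rw [List.sum_cons, Nat.ofDigits_cons]
    exact Nat.add_le_add_left (ih.trans (Nat.le_mul_of_pos_left _ hb)) a

lemma map_auxQ (K : Type) [Field K] [Fintype K] (m d : ℕ) (c : Fin m → K) :
    (auxQ K m (Fintype.card K) d).map (MvPolynomial.eval c) =
      (∑ i : Fin m, Polynomial.C (c i) * Polynomial.X ^ (i : ℕ)) ^ d := by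
  classical
  set q := Fintype.card K with hqdef
  set B : Polynomial K := ∑ i : Fin m, Polynomial.C (c i) * Polynomial.X ^ (i : ℕ) with hB
  have hp : CharP K (ringChar K) := ringChar.charP K
  obtain ⟨e, hpprime, hqe⟩ := FiniteField.card K (ringChar K)
  haveI : CharP (Polynomial K) (ringChar K) := Polynomial.instCharP _
  haveI : ExpChar (Polynomial K) (ringChar K) := ExpChar.prime hpprime
  have hBpow : ∀ j : ℕ, B ^ q ^ j =
      ∑ i : Fin m, Polynomial.C (c i) * Polynomial.X ^ ((i : ℕ) * q ^ j) := by
    intro j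
    have hq : q ^ j = ringChar K ^ (e * j) := by rw [hqdef, hqe, ← pow_mul]
    rw [hB, hq, sum_pow_char_pow]
    refine Finset.sum_congr rfl fun i _ => ?_
    rw [mul_pow, ← Polynomial.C_pow, ← pow_mul]
    congr 1
    rw [← hq]
    exact congrArg Polynomial.C (FiniteField.pow_card_pow j (c i))
  have hmapL : ∀ j : ℕ, (auxL K m q j).map (MvPolynomial.eval c) = B ^ q ^ j := by
    intro j
    rw [hBpow j, auxL, Polynomial.map_sum]
    refine Finset.sum_congr rfl fun i _ => ?_
    rw [Polynomial.map_mul, Polynomial.map_C, Polynomial.map_pow, Polynomial.map_X,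
      MvPolynomial.eval_X]
  rw [auxQ, Polynomial.map_prod]
  have : ∀ j ∈ Finset.range (Nat.digits q d).length,
      ((auxL K m q j) ^ ((Nat.digits q d).getD j 0)).map (MvPolynomial.eval c) =
      B ^ (((Nat.digits q d).getD j 0) * q ^ j) := by
    intro j _
    rw [Polynomial.map_pow, hmapL j, ← pow_mul, mul_comm]
  rw [Finset.prod_congr rfl this, Finset.prod_pow_eq_pow_sum]
  congr 1
  rw [← ofDigits_eq_sum, Nat.ofDigits_digits]

/-- Encoding composition as a polynomial map: let `K` be the field with `q` elements,
`F ∈ K[x]` of degree `k ≥ 1`, and `m, n ≥ 1` with `k(m-1) ≤ n-1`. Then there are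
multivariate polynomials `φ₀, …, φ_{n-1} ∈ K[y₀, …, y_{m-1}]`, each of total degree
at most `min {k, (q-1)(1 + log_q k)}`, such that for every `(c₀, …, c_{m-1}) ∈ K^m`,
`F(c₀ + c₁x + ⋯ + c_{m-1}x^{m-1}) = ∑_{i<n} φ_i(c₀, …, c_{m-1}) xⁱ` in `K[x]`. -/
theorem stmt_18 (q : ℕ) (K : Type) [Field K] [Fintype K] (hq : Fintype.card K = q)
    (F : Polynomial K) (k : ℕ) (hk : 1 ≤ k) (hdeg : F.natDegree = k)
    (m n : ℕ) (hm : 0 < m) (hn : 0 < n) (hmn : k * (m - 1) ≤ n - 1) :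
    ∃ φ : Fin n → MvPolynomial (Fin m) K,
      (∀ i, ((φ i).totalDegree : ℝ) ≤
        min (k : ℝ) (((q : ℝ) - 1) * (1 + Real.logb q k))) ∧
      ∀ c : Fin m → K,
        F.comp (∑ j : Fin m, Polynomial.C (c j) * Polynomial.X ^ (j : ℕ)) =
          ∑ i : Fin n, Polynomial.C (MvPolynomial.eval c (φ i)) * Polynomial.X ^ (i : ℕ) := by
  classical
  subst hq
  set q := Fintype.card K with hqdef
  have hq2 : 2 ≤ q := Fintype.one_lt_card
  have hq1R : (1 : ℝ) < q := by exact_mod_cast hq2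
  refine ⟨fun i => ∑ d ∈ F.support, MvPolynomial.C (F.coeff d) *
    ((auxQ K m q d).coeff (i : ℕ)), ?_, ?_⟩
  · -- degree bound
    intro i
    -- a ℕ-level bound for each summand, then split into the two bounds
    have hsupk : ∀ d ∈ F.support, d ≤ k := fun d hd => hdeg ▸ Polynomial.le_natDegree_of_ne_zero
      (Polynomial.mem_support_iff.mp hd)
    have hterm : ∀ d ∈ F.support,
        (MvPolynomial.C (F.coeff d) * ((auxQ K m q d).coeff (i : ℕ))).totalDegree ≤
          (Nat.digits q d).sum := fun d _ =>
      (MvPolynomial.totalDegree_mul _ _).trans (by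
        simpa [MvPolynomial.totalDegree_C] using auxQ_coeff_totalDegree K m q d (i : ℕ))
    have hboundk : ∀ d ∈ F.support, (Nat.digits q d).sum ≤ k := by
      intro d hd
      calc (Nat.digits q d).sum ≤ Nat.ofDigits q (Nat.digits q d) :=
            sum_le_ofDigits q (by omega) _
        _ = d := Nat.ofDigits_digits q d
        _ ≤ k := hsupk d hd
    have hboundlog : ∀ d ∈ F.support, (Nat.digits q d).sum ≤ (q - 1) * (Nat.log q k + 1) := by
      intro d hd
      rcases Nat.eq_zero_or_pos d with rfl | hd0
      · simp
      have hlen : (Nat.digits q d).length = Nat.log q d + 1 :=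
        Nat.digits_len q d hq2 (by omega)
      have := List.sum_le_card_nsmul (Nat.digits q d) (q - 1)
        (fun x hx => Nat.le_sub_one_of_lt (Nat.digits_lt_base hq2 hx))
      rw [hlen, smul_eq_mul] at this
      refine this.trans ?_
      rw [mul_comm ((q:ℕ) - 1)]
      exact Nat.mul_le_mul_right _ (by
        have := Nat.log_mono_right (b := q) (hsupk d hd)
        omega)
    have h1 : ((∑ d ∈ F.support, MvPolynomial.C (F.coeff d) *
        ((auxQ K m q d).coeff (i : ℕ))).totalDegree) ≤ k :=
      MvPolynomial.totalDegree_finsetSum_le fun d hd => (hterm d hd).trans (hboundk d hd)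
    have h2 : ((∑ d ∈ F.support, MvPolynomial.C (F.coeff d) *
        ((auxQ K m q d).coeff (i : ℕ))).totalDegree) ≤ (q - 1) * (Nat.log q k + 1) :=
      MvPolynomial.totalDegree_finsetSum_le fun d hd => (hterm d hd).trans (hboundlog d hd)
    refine le_min (by exact_mod_cast h1) ?_
    have hlogle : (Nat.log q k : ℝ) ≤ Real.logb q k := by
      have hpow : ((q : ℝ) ^ (Nat.log q k)) ≤ (k : ℝ) := by
        exact_mod_cast Nat.pow_log_le_self q (by omega : k ≠ 0)
      have : Real.logb q ((q : ℝ) ^ (Nat.log q k)) ≤ Real.logb q k :=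
        Real.logb_le_logb_of_le hq1R (by positivity) hpow
      rwa [Real.logb_pow, Real.logb_self_eq_one hq1R, mul_one] at this
    calc (((∑ d ∈ F.support, MvPolynomial.C (F.coeff d) *
          ((auxQ K m q d).coeff (i : ℕ))).totalDegree : ℝ))
        ≤ ((q - 1) * (Nat.log q k + 1) : ℕ) := by exact_mod_cast h2
      _ = ((q : ℝ) - 1) * ((Nat.log q k : ℝ) + 1) := by
          push_cast [Nat.cast_sub (by omega : 1 ≤ q)]; ring
      _ ≤ ((q : ℝ) - 1) * (1 + Real.logb q k) := by
          apply mul_le_mul_of_nonneg_left _ (by linarith)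
          linarith
  · -- the identity
    intro c
    set B : Polynomial K := ∑ j : Fin m, Polynomial.C (c j) * Polynomial.X ^ (j : ℕ) with hB
    have hev : ∀ i : ℕ, MvPolynomial.eval c (∑ d ∈ F.support, MvPolynomial.C (F.coeff d) *
        ((auxQ K m q d).coeff i)) = (F.comp B).coeff i := by
      intro i
      rw [map_sum, Polynomial.comp_eq_sum_left, Polynomial.sum, Polynomial.finset_sum_coeff]
      refine Finset.sum_congr rfl fun d _ => ?_
      rw [map_mul, MvPolynomial.eval_C, Polynomial.coeff_C_mul]
      congr 1
      rw [← map_auxQ K m d c, Polynomial.coeff_map]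
    have hBdeg : B.natDegree ≤ m - 1 :=
      Polynomial.natDegree_sum_le_of_forall_le _ _ fun j _ =>
        (Polynomial.natDegree_C_mul_X_pow_le (c j) (j : ℕ)).trans (by omega)
    have hcompdeg : (F.comp B).natDegree < n := by
      rw [Polynomial.natDegree_comp, hdeg]
      have : k * B.natDegree ≤ k * (m - 1) := Nat.mul_le_mul_left k hBdeg
      omega
    conv_lhs => rw [(F.comp B).as_sum_range' n hcompdeg]
    rw [← Fin.sum_univ_eq_sum_range (fun i => (Polynomial.monomial i) ((F.comp B).coeff i)) n]
    refine Finset.sum_congr rfl fun i _ => ?_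
    rw [hev (i : ℕ), Polynomial.C_mul_X_pow_eq_monomial]
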